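/- Let P and B be n×n real symmetric positive semidefinite matrices and N an n×n real matrix with ‖N‖ < 1, where ‖·‖ is the operator norm induced by the Euclidean norm. If xᵀ P x ≤ xᵀ (N P Nᵀ + B) x for all x ∈ ℝⁿ (i.e., P ⪯ N P Nᵀ + B in the Loewner order), then ‖P‖ ≤ ‖B‖ / (1 − ‖N‖²). -/

import Mathlib

open Matrix

/-- The operator norm of a matrix induced by the Euclidean norm on `ℝⁿ`. -/
noncomputable def matrixOpNorm {n : ℕ} (M : Matrix (Fin n) (Fin n) ℝ) : ℝ :=
  ‖LinearMap.toContinuousLinearMap (Matrix.toEuclideanLin M)‖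

namespace CovAux

noncomputable def ev {n : ℕ} (x : Fin n → ℝ) : EuclideanSpace ℝ (Fin n) :=
  (WithLp.equiv 2 _).symm x

lemma clm_ev {n : ℕ} (M : Matrix (Fin n) (Fin n) ℝ) (x : Fin n → ℝ) :
    (LinearMap.toContinuousLinearMap (Matrix.toEuclideanLin M)) (ev x) = ev (M.mulVec x) := by
  simp [ev, Matrix.toEuclideanLin_apply_piLp_toLp]

lemma norm_ev_mulVec_le {n : ℕ} (M : Matrix (Fin n) (Fin n) ℝ) (x : Fin n → ℝ) :
    ‖ev (M.mulVec x)‖ ≤ matrixOpNorm M * ‖ev x‖ := by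
  rw [← clm_ev]
  exact (LinearMap.toContinuousLinearMap (Matrix.toEuclideanLin M)).le_opNorm _

lemma dot_eq_inner {n : ℕ} (x y : Fin n → ℝ) : x ⬝ᵥ y = (inner ℝ (ev x) (ev y) : ℝ) := by
  simp [ev, dotProduct, PiLp.inner_apply, RCLike.inner_apply, mul_comm]

lemma quad_le {n : ℕ} (M : Matrix (Fin n) (Fin n) ℝ) (x : Fin n → ℝ) :
    x ⬝ᵥ M.mulVec x ≤ matrixOpNorm M * ‖ev x‖ ^ 2 := by
  rw [dot_eq_inner]
  calc (inner ℝ (ev x) (ev (M.mulVec x)) : ℝ) ≤ ‖ev x‖ * ‖ev (M.mulVec x)‖ :=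
        real_inner_le_norm _ _
    _ ≤ ‖ev x‖ * (matrixOpNorm M * ‖ev x‖) := by
        have := norm_ev_mulVec_le M x
        nlinarith [norm_nonneg (ev x)]
    _ = matrixOpNorm M * ‖ev x‖ ^ 2 := by ring

open scoped MatrixOrder in
lemma opNorm_le_of_quad {n : ℕ} {M : Matrix (Fin n) (Fin n) ℝ} (hM : M.PosSemidef) {c : ℝ}
    (hc : 0 ≤ c) (h : ∀ x : Fin n → ℝ, x ⬝ᵥ M.mulVec x ≤ c * ‖ev x‖ ^ 2) :
    matrixOpNorm M ≤ c := by
  set S := CFC.sqrt M with hSdef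
  have hS : S.PosSemidef := (CFC.sqrt_nonneg M).posSemidef
  have hSS : S * S = M := CFC.sqrt_mul_sqrt_self M hM.nonneg
  have hSsymm : Sᵀ = S := by
    have := hS.1
    rwa [Matrix.IsHermitian, Matrix.conjTranspose_eq_transpose_of_trivial] at this
  -- ‖ev (S *ᵥ x)‖ ^ 2 = x ⬝ᵥ M *ᵥ x
  have hsq : ∀ x : Fin n → ℝ, ‖ev (S.mulVec x)‖ ^ 2 = x ⬝ᵥ M.mulVec x := by
    intro x
    rw [← real_inner_self_eq_norm_sq, ← dot_eq_inner]
    calc (S.mulVec x) ⬝ᵥ (S.mulVec x) = (x ᵥ* S) ⬝ᵥ (S.mulVec x) := by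
          rw [← hSsymm, Matrix.mulVec_transpose, hSsymm]
      _ = x ⬝ᵥ (S.mulVec (S.mulVec x)) := (Matrix.dotProduct_mulVec x S _).symm
      _ = x ⬝ᵥ M.mulVec x := by rw [Matrix.mulVec_mulVec, hSS]
  have hSx : ∀ x : Fin n → ℝ, ‖ev (S.mulVec x)‖ ≤ Real.sqrt c * ‖ev x‖ := by
    intro x
    have h1 : ‖ev (S.mulVec x)‖ ^ 2 ≤ (Real.sqrt c * ‖ev x‖) ^ 2 := by
      rw [hsq, mul_pow, Real.sq_sqrt hc]
      exact h x
    have h2 : 0 ≤ Real.sqrt c * ‖ev x‖ := by positivity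
    nlinarith [norm_nonneg (ev (S.mulVec x))]
  have hSnorm : matrixOpNorm S ≤ Real.sqrt c := by
    refine ContinuousLinearMap.opNorm_le_bound _ (Real.sqrt_nonneg c) fun y => ?_
    have hy : y = ev (WithLp.equiv 2 (Fin n → ℝ) y) := rfl
    rw [hy, clm_ev]
    exact hSx _
  refine ContinuousLinearMap.opNorm_le_bound _ hc fun y => ?_
  have hy : y = ev (WithLp.equiv 2 (Fin n → ℝ) y) := rfl
  rw [hy, clm_ev]
  set x := WithLp.equiv 2 (Fin n → ℝ) y with hx
  have hMx : M.mulVec x = S.mulVec (S.mulVec x) := by rw [Matrix.mulVec_mulVec, hSS]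
  rw [hMx]
  calc ‖ev (S.mulVec (S.mulVec x))‖ ≤ matrixOpNorm S * ‖ev (S.mulVec x)‖ :=
        norm_ev_mulVec_le S _
    _ ≤ Real.sqrt c * (Real.sqrt c * ‖ev x‖) := by
        have h1 := hSx x
        have h2 : (0:ℝ) ≤ matrixOpNorm S := norm_nonneg _
        nlinarith [norm_nonneg (ev (S.mulVec x)), Real.sqrt_nonneg c]
    _ = c * ‖ev x‖ := by rw [← mul_assoc, Real.mul_self_sqrt hc]

lemma opNorm_transpose {n : ℕ} (M : Matrix (Fin n) (Fin n) ℝ) :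
    matrixOpNorm Mᵀ = matrixOpNorm M := by
  unfold matrixOpNorm
  rw [← Matrix.conjTranspose_eq_transpose_of_trivial,
    Matrix.toEuclideanLin_conjTranspose_eq_adjoint,
    LinearMap.adjoint_toContinuousLinearMap]
  exact (LinearIsometryEquiv.norm_map ContinuousLinearMap.adjoint _)

end CovAux

open CovAux in
/-- Bound on a symmetric positive semidefinite matrix satisfying
a Loewner-order fixed-point inequality with a contraction. -/
theorem covariance_norm_bound (n : ℕ)
    (P B N : Matrix (Fin n) (Fin n) ℝ)
    (hP : P.PosSemidef) (hB : B.PosSemidef)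
    (hN : matrixOpNorm N < 1)
    (hle : ∀ x : Fin n → ℝ, x ⬝ᵥ P.mulVec x ≤ x ⬝ᵥ (N * P * Nᵀ + B).mulVec x) :
    matrixOpNorm P ≤ matrixOpNorm B / (1 - matrixOpNorm N ^ 2) := by
  set p := matrixOpNorm P with hp
  set b := matrixOpNorm B with hb
  set ν := matrixOpNorm N with hν
  have hν0 : 0 ≤ ν := norm_nonneg _
  have hp0 : 0 ≤ p := norm_nonneg _
  have hb0 : 0 ≤ b := norm_nonneg _
  have hν1 : ν ^ 2 < 1 := by nlinarith
  have key : ∀ x : Fin n → ℝ, x ⬝ᵥ P.mulVec x ≤ (p * ν ^ 2 + b) * ‖ev x‖ ^ 2 := by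
    intro x
    have h1 := hle x
    have h2 : x ⬝ᵥ (N * P * Nᵀ + B).mulVec x
        = (Nᵀ.mulVec x) ⬝ᵥ P.mulVec (Nᵀ.mulVec x) + x ⬝ᵥ B.mulVec x := by
      rw [Matrix.add_mulVec, dotProduct_add]
      congr 1
      calc x ⬝ᵥ (N * P * Nᵀ).mulVec x = x ⬝ᵥ N.mulVec ((P * Nᵀ).mulVec x) := by
            rw [Matrix.mulVec_mulVec, Matrix.mul_assoc]
        _ = (x ᵥ* N) ⬝ᵥ ((P * Nᵀ).mulVec x) := Matrix.dotProduct_mulVec x N _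
        _ = (Nᵀ.mulVec x) ⬝ᵥ P.mulVec (Nᵀ.mulVec x) := by
            rw [← Matrix.mulVec_transpose, Matrix.mulVec_mulVec]
    have h3 : (Nᵀ.mulVec x) ⬝ᵥ P.mulVec (Nᵀ.mulVec x) ≤ p * ‖ev (Nᵀ.mulVec x)‖ ^ 2 :=
      quad_le P _
    have h4 : ‖ev (Nᵀ.mulVec x)‖ ≤ ν * ‖ev x‖ := by
      have := norm_ev_mulVec_le Nᵀ x
      rwa [opNorm_transpose] at this
    have h5 : x ⬝ᵥ B.mulVec x ≤ b * ‖ev x‖ ^ 2 := quad_le B x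
    have h6 : ‖ev (Nᵀ.mulVec x)‖ ^ 2 ≤ ν ^ 2 * ‖ev x‖ ^ 2 := by
      nlinarith [norm_nonneg (ev (Nᵀ.mulVec x)), norm_nonneg (ev x)]
    nlinarith
  have hkey : p ≤ p * ν ^ 2 + b := by
    have := opNorm_le_of_quad hP (c := p * ν ^ 2 + b) (by positivity) key
    exact this
  rw [le_div_iff₀ (by linarith)]
  nlinarith
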